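/- Random-walk structure of the Chebyshev expansion of the exponential: for j ∈ ℕ let q(j) = e^{−1/2} 2^{−j} / j! (the Poisson distribution with mean 1/2), and for r, r′ ∈ ℤ define p(r′|r) = ∑_{j=0}^{∞} q(j) · 2^{−j} · binom(j, (j + r′ − r)/2), where the binomial coefficient is taken to be 0 unless (j + r′ − r)/2 is an integer between 0 and j. Then: (i) p(r′|r) ≥ 0 and ∑_{r′∈ℤ} p(r′|r) = 1; (ii) p(r+s|r) = p(r−s|r) for every s ∈ ℤ (symmetry about r); (iii) ∑_{r′∈ℤ} (r′ − r)² p(r′|r) = 1/2 (variance 1/2); and (iv) for every x ∈ [−1, 1] and r ∈ ℤ, e^{−(1−x)/2} T_r(x) = ∑_{r′∈ℤ} p(r′|r) T_{r′}(x), the series converging absolutely. -/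

import Mathlib

namespace Paper

/-- The Chebyshev polynomial function of the first kind with integer index,
`T_r(x) = cos(r arccos x)` on `[-1, 1]`. -/
noncomputable def chebFun (r : ℤ) (x : ℝ) : ℝ := Real.cos (r * Real.arccos x)

/-- The Poisson distribution with mean `1/2`: `q(j) = e^{-1/2} 2^{-j} / j!`. -/
noncomputable def poissonWeight (j : ℕ) : ℝ :=
  Real.exp (-(1 / 2)) * (2 : ℝ)⁻¹ ^ j / (j.factorial : ℝ)

/-- `binom(j, (j+t)/2)`, taken to be `0` unless `(j+t)/2` is an integer between `0`
and `j`. -/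
noncomputable def halfBinom (j : ℕ) (t : ℤ) : ℝ :=
  ∑ s ∈ Finset.range (j + 1), if (j : ℤ) + t = 2 * (s : ℤ) then (j.choose s : ℝ) else 0

/-- The random-walk kernel `p(r'|r) = ∑_j q(j) 2^{-j} binom(j, (j+r'-r)/2)`. -/
noncomputable def rwKernel (r' r : ℤ) : ℝ :=
  ∑' j : ℕ, poissonWeight j * (2 : ℝ)⁻¹ ^ j * halfBinom j (r' - r)

/-! ### Auxiliary machinery -/

/-- The weight of a single random walk path segment. -/
noncomputable def W (p : ℕ × ℕ) : ℝ :=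
  poissonWeight p.1 * (2 : ℝ)⁻¹ ^ p.1 * (p.1.choose p.2 : ℝ)

lemma poissonWeight_nonneg (j : ℕ) : 0 ≤ poissonWeight j := by
  unfold poissonWeight; positivity

lemma W_nonneg (p : ℕ × ℕ) : 0 ≤ W p := by
  unfold W
  have := poissonWeight_nonneg p.1
  positivity

lemma W_eq_zero {j s : ℕ} (h : j < s) : W (j, s) = 0 := by
  simp [W, Nat.choose_eq_zero_of_lt h]

lemma hasSum_exp_real (x : ℝ) : HasSum (fun n : ℕ => x ^ n / n.factorial) (Real.exp x) := by
  have h : Real.exp x = ∑' n : ℕ, x ^ n / n.factorial := by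
    rw [Real.exp_eq_exp_ℝ, NormedSpace.exp_eq_tsum_div]
  rw [h]
  exact (Real.summable_pow_div_factorial x).hasSum

lemma hasSum_of_support_range {j : ℕ} {f : ℕ → ℝ} (h0 : ∀ s, j < s → f s = 0) {a : ℝ}
    (ha : ∑ s ∈ Finset.range (j + 1), f s = a) : HasSum f a := by
  have := hasSum_sum_of_ne_finset_zero (s := Finset.range (j + 1)) (f := f)
    (L := SummationFilter.unconditional ℕ)
    (fun s hs => h0 s (by simp [Finset.mem_range] at hs; omega))
  rwa [ha] at this

lemma hasSum_W_row (j : ℕ) : HasSum (fun s => W (j, s)) (poissonWeight j) := by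
  refine hasSum_of_support_range (fun s hs => W_eq_zero hs) ?_
  have h : ∑ s ∈ Finset.range (j + 1), W (j, s)
      = poissonWeight j * (2 : ℝ)⁻¹ ^ j * ((2 : ℝ) ^ j) := by
    simp only [W]
    rw [← Finset.mul_sum]
    congr 1
    have := Nat.sum_range_choose j
    calc ∑ s ∈ Finset.range (j + 1), ((j.choose s : ℕ) : ℝ)
        = ((∑ s ∈ Finset.range (j + 1), j.choose s : ℕ) : ℝ) := by push_cast; ring
      _ = (2 : ℝ) ^ j := by rw [this]; push_cast; ring
  rw [h, mul_assoc]
  have : (2 : ℝ)⁻¹ ^ j * (2 : ℝ) ^ j = 1 := by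
    rw [← mul_pow]; norm_num
  rw [this, mul_one]

lemma hasSum_poisson : HasSum poissonWeight 1 := by
  have h := (hasSum_exp_real (1 / 2)).mul_left (Real.exp (-(1 / 2)))
  have he : Real.exp (-(1 / 2)) * Real.exp (1 / 2) = 1 := by
    rw [← Real.exp_add]; norm_num
  rw [he] at h
  refine h.congr_fun fun j => ?_
  unfold poissonWeight
  rw [div_eq_mul_inv, mul_assoc, one_div, inv_pow]
  ring

lemma summable_of_rows_nonneg {f : ℕ × ℕ → ℝ} (h0 : ∀ p, 0 ≤ f p)
    {g : ℕ → ℝ} (hrow : ∀ j, HasSum (fun s => f (j, s)) (g j)) (hg : Summable g) :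
    Summable f := by
  rw [summable_prod_of_nonneg h0]
  refine ⟨fun j => (hrow j).summable, ?_⟩
  have : (fun j => ∑' s, f (j, s)) = g := funext fun j => (hrow j).tsum_eq
  rw [this]; exact hg

lemma hasSum_prod_of_rows {f : ℕ × ℕ → ℝ} (hf : Summable f) {g : ℕ → ℝ} {A : ℝ}
    (hrow : ∀ j, HasSum (fun s => f (j, s)) (g j)) (hg : HasSum g A) : HasSum f A := by
  have h : ∑' p, f p = A := by
    rw [Summable.tsum_prod' hf (fun j => (hrow j).summable),
      tsum_congr (fun j => (hrow j).tsum_eq)]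
    exact hg.tsum_eq
  exact h ▸ hf.hasSum

lemma summable_W : Summable W :=
  summable_of_rows_nonneg W_nonneg hasSum_W_row hasSum_poisson.summable

lemma hasSum_W : HasSum W 1 :=
  hasSum_prod_of_rows summable_W hasSum_W_row hasSum_poisson

/-- The fiber tsum of a summable function with upper triangular support. -/
lemma tsum_fiber (r r' : ℤ) (f : ℕ × ℕ → ℝ) (hf : Summable f)
    (h0 : ∀ j s, j < s → f (j, s) = 0) :
    ∑' p : ((fun p : ℕ × ℕ => (r + 2 * p.2 - p.1 : ℤ)) ⁻¹' {r'}), f p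
      = ∑' j : ℕ, ∑ s ∈ Finset.range (j + 1),
          (if (r + 2 * s - j : ℤ) = r' then f (j, s) else 0) := by
  rw [tsum_subtype]
  have hind : Summable (Set.indicator
      ((fun p : ℕ × ℕ => (r + 2 * p.2 - p.1 : ℤ)) ⁻¹' {r'}) f) := hf.indicator _
  have hinj : ∀ j : ℕ, Function.Injective (fun s : ℕ => ((j, s) : ℕ × ℕ)) := by
    intro j a b hab
    simpa using hab
  rw [Summable.tsum_prod' hind (fun j => hind.comp_injective (hinj j))]
  refine tsum_congr fun j => ?_
  rw [tsum_eq_sum (s := Finset.range (j + 1)) ?_]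
  · refine Finset.sum_congr rfl fun s _ => ?_
    classical
    simp only [Set.indicator_apply, Set.mem_preimage, Set.mem_singleton_iff]
  · intro s hs
    have hj : j < s := by simp [Finset.mem_range] at hs; omega
    classical
    simp only [Set.indicator_apply, Set.mem_preimage, Set.mem_singleton_iff, h0 j s hj,
      ite_self]

lemma rwKernel_eq_fiber (r r' : ℤ) :
    rwKernel r' r
      = ∑' p : ((fun p : ℕ × ℕ => (r + 2 * p.2 - p.1 : ℤ)) ⁻¹' {r'}), W p := by
  rw [tsum_fiber r r' W summable_W (fun j s h => W_eq_zero h)]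
  unfold rwKernel halfBinom
  refine tsum_congr fun j => ?_
  rw [Finset.mul_sum]
  refine Finset.sum_congr rfl fun s _ => ?_
  rw [mul_ite, mul_zero]
  exact if_congr (by omega) rfl rfl

lemma rwKernel_nonneg (r r' : ℤ) : 0 ≤ rwKernel r' r := by
  refine tsum_nonneg fun j => ?_
  have h1 := poissonWeight_nonneg j
  have h2 : 0 ≤ halfBinom j (r' - r) := by
    refine Finset.sum_nonneg fun s _ => ?_
    split <;> positivity
  positivity

/-- The main workhorse: transport a `HasSum` over paths to a `HasSum` over endpoints. -/
lemma hasSum_kernel (r : ℤ) (g : ℤ → ℝ) {A : ℝ}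
    (hA : HasSum (fun p : ℕ × ℕ => W p * g (r + 2 * p.2 - p.1)) A) :
    HasSum (fun r' : ℤ => rwKernel r' r * g r') A := by
  have h1 := hA.tsum_fiberwise (fun p : ℕ × ℕ => (r + 2 * p.2 - p.1 : ℤ))
  have he : ∀ r' : ℤ, rwKernel r' r * g r'
      = ∑' p : ((fun p : ℕ × ℕ => (r + 2 * p.2 - p.1 : ℤ)) ⁻¹' {r'}),
          (W p * g (r + 2 * (p : ℕ × ℕ).2 - (p : ℕ × ℕ).1)) := by
    intro r'
    have h2 : ∀ p : ((fun p : ℕ × ℕ => (r + 2 * p.2 - p.1 : ℤ)) ⁻¹' {r'}),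
        W p * g (r + 2 * (p : ℕ × ℕ).2 - (p : ℕ × ℕ).1) = W p * g r' := by
      intro p
      have hp := p.2
      simp only [Set.mem_preimage, Set.mem_singleton_iff] at hp
      rw [hp]
    rw [tsum_congr h2, tsum_mul_right, ← rwKernel_eq_fiber]
  have : (fun r' : ℤ => ∑' p : ((fun p : ℕ × ℕ => (r + 2 * p.2 - p.1 : ℤ)) ⁻¹' {r'}),
      (W p * g (r + 2 * (p : ℕ × ℕ).2 - (p : ℕ × ℕ).1)))
      = fun r' : ℤ => rwKernel r' r * g r' := funext fun r' => (he r').symm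
  rwa [this] at h1

/-! ### Pascal recursion for row sums -/

lemma pascal_sum (j : ℕ) (h : ℤ → ℝ) :
    ∑ s ∈ Finset.range (j + 2), (((j + 1).choose s : ℕ) : ℝ) * h (2 * s - (j + 1)) =
      (∑ s ∈ Finset.range (j + 1), ((j.choose s : ℕ) : ℝ) * h (2 * s - j + 1)) +
      ∑ s ∈ Finset.range (j + 1), ((j.choose s : ℕ) : ℝ) * h (2 * s - j - 1) := by
  rw [Finset.sum_range_succ' (fun s => (((j + 1).choose s : ℕ) : ℝ) * h (2 * s - (j + 1))) (j + 1)]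
  have hsplit : ∀ s ∈ Finset.range (j + 1),
      (((j + 1).choose (s + 1) : ℕ) : ℝ) * h (2 * (s + 1 : ℕ) - (j + 1))
        = ((j.choose s : ℕ) : ℝ) * h (2 * s - j + 1)
          + ((j.choose (s + 1) : ℕ) : ℝ) * h (2 * (s + 1 : ℕ) - j - 1) := by
    intro s _
    rw [Nat.choose_succ_succ]
    have e1 : (2 * ((s : ℤ) + 1) - (j + 1)) = 2 * s - j + 1 := by ring
    have e2 : (2 * ((s : ℤ) + 1) - j - 1) = 2 * s - j + 1 := by ring
    push_cast
    rw [e1, e2, add_mul]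
  rw [Finset.sum_congr rfl hsplit, Finset.sum_add_distrib]
  rw [add_assoc]
  congr 1
  -- remaining: second sum + boundary term = reflected sum
  have key : ∑ s ∈ Finset.range (j + 2), ((j.choose s : ℕ) : ℝ) * h (2 * s - j - 1)
      = (∑ s ∈ Finset.range (j + 1), ((j.choose (s + 1) : ℕ) : ℝ) * h (2 * (s + 1 : ℕ) - j - 1))
        + (((j + 1).choose 0 : ℕ) : ℝ) * h (2 * (0 : ℕ) - (j + 1)) := by
    rw [Finset.sum_range_succ' (fun s => ((j.choose s : ℕ) : ℝ) * h (2 * s - j - 1)) (j + 1)]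
    congr 1
    have e3 : (2 * ((0 : ℕ) : ℤ) - j - 1) = 2 * ((0 : ℕ) : ℤ) - (j + 1) := by push_cast; ring
    rw [e3]
    norm_num
  rw [← key, Finset.sum_range_succ]
  simp [Nat.choose_succ_self]

lemma rowsum_var (j : ℕ) (c : ℤ) :
    ∑ s ∈ Finset.range (j + 1), ((j.choose s : ℕ) : ℝ) * ((2 * s - j + c : ℤ) : ℝ) ^ 2
      = 2 ^ j * ((j : ℝ) + ((c : ℤ) : ℝ) ^ 2) := by
  induction j generalizing c with
  | zero => simp
  | succ j ih =>
    have hps := pascal_sum j (fun t : ℤ => ((t + c : ℤ) : ℝ) ^ 2)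
    beta_reduce at hps
    refine Eq.trans (Finset.sum_congr rfl fun s _ => ?_) (hps.trans ?_)
    · have e : (2 * (s : ℤ) - ((j + 1 : ℕ) : ℤ) + c) = 2 * (s : ℤ) - ((j : ℤ) + 1) + c := by
        push_cast; ring
      rw [e]
    · have h1 : ∑ s ∈ Finset.range (j + 1),
            ((j.choose s : ℕ) : ℝ) * ((2 * s - j + 1 + c : ℤ) : ℝ) ^ 2
          = ∑ s ∈ Finset.range (j + 1),
            ((j.choose s : ℕ) : ℝ) * ((2 * s - j + (c + 1) : ℤ) : ℝ) ^ 2 :=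
        Finset.sum_congr rfl fun s _ => by
          rw [show (2 * (s : ℤ) - j + 1 + c) = 2 * s - j + (c + 1) by ring]
      have h2 : ∑ s ∈ Finset.range (j + 1),
            ((j.choose s : ℕ) : ℝ) * ((2 * s - j - 1 + c : ℤ) : ℝ) ^ 2
          = ∑ s ∈ Finset.range (j + 1),
            ((j.choose s : ℕ) : ℝ) * ((2 * s - j + (c - 1) : ℤ) : ℝ) ^ 2 :=
        Finset.sum_congr rfl fun s _ => by
          rw [show (2 * (s : ℤ) - j - 1 + c) = 2 * s - j + (c - 1) by ring]
      rw [h1, h2, ih (c + 1), ih (c - 1)]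
      push_cast
      ring

lemma rowsum_cos (θ : ℝ) (j : ℕ) (r : ℤ) :
    ∑ s ∈ Finset.range (j + 1), ((j.choose s : ℕ) : ℝ)
        * Real.cos (((2 * s - j + r : ℤ) : ℝ) * θ)
      = 2 ^ j * (Real.cos θ) ^ j * Real.cos ((r : ℝ) * θ) := by
  induction j generalizing r with
  | zero => simp
  | succ j ih =>
    have hps := pascal_sum j (fun t : ℤ => Real.cos (((t + r : ℤ) : ℝ) * θ))
    beta_reduce at hps
    refine Eq.trans (Finset.sum_congr rfl fun s _ => ?_) (hps.trans ?_)
    · have e : (2 * (s : ℤ) - ((j + 1 : ℕ) : ℤ) + r) = 2 * (s : ℤ) - ((j : ℤ) + 1) + r := by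
        push_cast; ring
      rw [e]
    · have h1 : ∑ s ∈ Finset.range (j + 1),
            ((j.choose s : ℕ) : ℝ) * Real.cos (((2 * s - j + 1 + r : ℤ) : ℝ) * θ)
          = ∑ s ∈ Finset.range (j + 1),
            ((j.choose s : ℕ) : ℝ) * Real.cos (((2 * s - j + (r + 1) : ℤ) : ℝ) * θ) :=
        Finset.sum_congr rfl fun s _ => by
          rw [show (2 * (s : ℤ) - j + 1 + r) = 2 * s - j + (r + 1) by ring]
      have h2 : ∑ s ∈ Finset.range (j + 1),
            ((j.choose s : ℕ) : ℝ) * Real.cos (((2 * s - j - 1 + r : ℤ) : ℝ) * θ)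
          = ∑ s ∈ Finset.range (j + 1),
            ((j.choose s : ℕ) : ℝ) * Real.cos (((2 * s - j + (r - 1) : ℤ) : ℝ) * θ) :=
        Finset.sum_congr rfl fun s _ => by
          rw [show (2 * (s : ℤ) - j - 1 + r) = 2 * s - j + (r - 1) by ring]
      rw [h1, h2, ih (r + 1), ih (r - 1)]
      have e1 : (((r + 1 : ℤ) : ℝ)) * θ = (r : ℝ) * θ + θ := by push_cast; ring
      have e2 : (((r - 1 : ℤ) : ℝ)) * θ = (r : ℝ) * θ - θ := by push_cast; ring
      rw [e1, e2, Real.cos_add, Real.cos_sub]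
      ring

/-! ### Symmetry -/

lemma halfBinom_neg (j : ℕ) (t : ℤ) : halfBinom j (-t) = halfBinom j t := by
  unfold halfBinom
  rw [← Finset.sum_range_reflect]
  refine Finset.sum_congr rfl fun i hi => ?_
  have hij : i ≤ j := by simp [Finset.mem_range] at hi; omega
  have h1 : j + 1 - 1 - i = j - i := by omega
  rw [h1]
  have hc : ((j - i : ℕ) : ℤ) = (j : ℤ) - i := by omega
  have hiff : ((j : ℤ) + -t = 2 * ((j - i : ℕ) : ℤ)) ↔ ((j : ℤ) + t = 2 * (i : ℤ)) := by
    rw [hc]; omega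
  rw [if_congr hiff rfl rfl, Nat.choose_symm hij]

/-! ### Main theorem -/

/-- **Random-walk structure of the Chebyshev expansion of the exponential**: the kernel
`p(r'|r)` is a probability distribution in `r'`, symmetric about `r`, of variance `1/2`,
and for every `x ∈ [-1,1]` and `r ∈ ℤ`,
`e^{-(1-x)/2} T_r(x) = ∑_{r'} p(r'|r) T_{r'}(x)`, the series converging absolutely. -/
theorem random_walk_chebyshev_expansion :
    (∀ r r' : ℤ, 0 ≤ rwKernel r' r) ∧
    (∀ r : ℤ, HasSum (fun r' : ℤ => rwKernel r' r) 1) ∧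
    (∀ r s : ℤ, rwKernel (r + s) r = rwKernel (r - s) r) ∧
    (∀ r : ℤ, HasSum (fun r' : ℤ => ((r' - r : ℤ) : ℝ) ^ 2 * rwKernel r' r) (1 / 2)) ∧
    (∀ x : ℝ, -1 ≤ x → x ≤ 1 → ∀ r : ℤ,
      Summable (fun r' : ℤ => |rwKernel r' r * chebFun r' x|) ∧
      HasSum (fun r' : ℤ => rwKernel r' r * chebFun r' x)
        (Real.exp (-(1 - x) / 2) * chebFun r x)) := by
  have part2 : ∀ r : ℤ, HasSum (fun r' : ℤ => rwKernel r' r) 1 := by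
    intro r
    have h := hasSum_kernel r (fun _ => 1) (A := 1) (by simpa using hasSum_W)
    simpa using h
  have part3 : ∀ r s : ℤ, rwKernel (r + s) r = rwKernel (r - s) r := by
    intro r s
    unfold rwKernel
    refine tsum_congr fun j => ?_
    rw [show r + s - r = s by ring, show r - s - r = -s by ring, halfBinom_neg]
  have part4 : ∀ r : ℤ,
      HasSum (fun r' : ℤ => ((r' - r : ℤ) : ℝ) ^ 2 * rwKernel r' r) (1 / 2) := by
    intro r
    have hrow : ∀ j : ℕ, HasSum
        (fun s : ℕ => W (j, s) * ((r + 2 * s - j - r : ℤ) : ℝ) ^ 2)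
        (poissonWeight j * j) := by
      intro j
      refine hasSum_of_support_range (fun s hs => by rw [W_eq_zero hs, zero_mul]) ?_
      have e : ∀ s ∈ Finset.range (j + 1),
          W (j, s) * ((r + 2 * s - j - r : ℤ) : ℝ) ^ 2
            = (poissonWeight j * (2 : ℝ)⁻¹ ^ j)
              * (((j.choose s : ℕ) : ℝ) * ((2 * s - j + (0 : ℤ) : ℤ) : ℝ) ^ 2) := by
        intro s _
        simp only [W]
        rw [show ((r + 2 * (s : ℤ) - j - r : ℤ) : ℝ) = ((2 * (s : ℤ) - j + 0 : ℤ) : ℝ) by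
          push_cast; ring]
        ring
      rw [Finset.sum_congr rfl e, ← Finset.mul_sum, rowsum_var j 0]
      have h2 : (2 : ℝ)⁻¹ ^ j * 2 ^ j = 1 := by rw [← mul_pow]; norm_num
      have h3 : poissonWeight j * (2 : ℝ)⁻¹ ^ j * (2 ^ j * ((j : ℝ) + ((0 : ℤ) : ℝ) ^ 2))
          = poissonWeight j * (j : ℝ) * ((2 : ℝ)⁻¹ ^ j * 2 ^ j) := by push_cast; ring
      rw [h3, h2, mul_one]
    have hq : HasSum (fun j : ℕ => poissonWeight j * j) (1 / 2) := by
      have h1 := (hasSum_exp_real (1 / 2)).mul_left (Real.exp (-(1 / 2)) * (1 / 2))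
      have h2 : (fun j : ℕ => Real.exp (-(1 / 2)) * (1 / 2) * ((1 / 2 : ℝ) ^ j / j.factorial))
          = fun j : ℕ => poissonWeight (j + 1) * ((j : ℝ) + 1) := by
        funext j
        unfold poissonWeight
        rw [Nat.factorial_succ]
        have hj : ((j.factorial : ℕ) : ℝ) ≠ 0 := Nat.cast_ne_zero.mpr j.factorial_ne_zero
        have hj1 : ((j : ℝ) + 1) ≠ 0 := by positivity
        push_cast
        field_simp
        ring
      rw [h2] at h1
      have h3 : HasSum (fun j : ℕ => poissonWeight (j + 1) * ((j + 1 : ℕ) : ℝ))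
          (Real.exp (-(1 / 2)) * (1 / 2) * Real.exp (1 / 2)) := by
        refine h1.congr_fun fun j => ?_
        push_cast
        ring
      have h4 := (hasSum_nat_add_iff (f := fun j : ℕ => poissonWeight j * (j : ℝ)) 1).mp h3
      have h5 : Real.exp (-(1 / 2)) * (1 / 2) * Real.exp (1 / 2)
          + ∑ i ∈ Finset.range 1, poissonWeight i * (i : ℝ) = 1 / 2 := by
        rw [Finset.sum_range_one]
        have : Real.exp (-(1 / 2)) * Real.exp (1 / 2) = 1 := by
          rw [← Real.exp_add]; norm_num
        push_cast
        nlinarith [this]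
      rwa [h5] at h4
    have hF : Summable (fun p : ℕ × ℕ =>
        W p * ((r + 2 * p.2 - p.1 - r : ℤ) : ℝ) ^ 2) := by
      refine summable_of_rows_nonneg (fun p => ?_) hrow hq.summable
      have := W_nonneg p
      positivity
    have hFsum : HasSum (fun p : ℕ × ℕ =>
        W p * ((r + 2 * p.2 - p.1 - r : ℤ) : ℝ) ^ 2) (1 / 2) :=
      hasSum_prod_of_rows hF hrow hq
    have h := hasSum_kernel r (fun m : ℤ => ((m - r : ℤ) : ℝ) ^ 2) hFsum
    refine h.congr_fun fun r' => ?_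
    ring
  refine ⟨fun r r' => rwKernel_nonneg r r', part2, part3, part4, ?_⟩
  intro x hx1 hx2 r
  have hc : Real.cos (Real.arccos x) = x := Real.cos_arccos hx1 hx2
  constructor
  · refine Summable.of_nonneg_of_le (fun r' => abs_nonneg _) (fun r' => ?_) (part2 r).summable
    rw [abs_mul]
    calc |rwKernel r' r| * |chebFun r' x| ≤ |rwKernel r' r| * 1 := by
          refine mul_le_mul_of_nonneg_left ?_ (abs_nonneg _)
          simp only [chebFun]
          exact Real.abs_cos_le_one _
      _ = rwKernel r' r := by rw [mul_one, abs_of_nonneg (rwKernel_nonneg r r')]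
  · have hrow : ∀ j : ℕ, HasSum
        (fun s : ℕ => W (j, s) * Real.cos (((r + 2 * s - j : ℤ) : ℝ) * Real.arccos x))
        (poissonWeight j * x ^ j * Real.cos ((r : ℝ) * Real.arccos x)) := by
      intro j
      refine hasSum_of_support_range (fun s hs => by rw [W_eq_zero hs, zero_mul]) ?_
      have e : ∀ s ∈ Finset.range (j + 1),
          W (j, s) * Real.cos (((r + 2 * s - j : ℤ) : ℝ) * Real.arccos x)
            = (poissonWeight j * (2 : ℝ)⁻¹ ^ j)
              * (((j.choose s : ℕ) : ℝ)
                * Real.cos (((2 * s - j + r : ℤ) : ℝ) * Real.arccos x)) := by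
        intro s _
        simp only [W]
        rw [show ((r + 2 * (s : ℤ) - j : ℤ) : ℝ) = ((2 * (s : ℤ) - j + r : ℤ) : ℝ) by
          push_cast; ring]
        ring
      rw [Finset.sum_congr rfl e, ← Finset.mul_sum, rowsum_cos (Real.arccos x) j r, hc]
      have h2 : (2 : ℝ)⁻¹ ^ j * 2 ^ j = 1 := by rw [← mul_pow]; norm_num
      have h3 : poissonWeight j * (2 : ℝ)⁻¹ ^ j
            * (2 ^ j * x ^ j * Real.cos ((r : ℝ) * Real.arccos x))
          = poissonWeight j * x ^ j * Real.cos ((r : ℝ) * Real.arccos x)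
            * ((2 : ℝ)⁻¹ ^ j * 2 ^ j) := by ring
      rw [h3, h2, mul_one]
    have hq : HasSum
        (fun j : ℕ => poissonWeight j * x ^ j * Real.cos ((r : ℝ) * Real.arccos x))
        (Real.exp (-(1 - x) / 2) * Real.cos ((r : ℝ) * Real.arccos x)) := by
      have h1 := (hasSum_exp_real (x / 2)).mul_left
        (Real.exp (-(1 / 2)) * Real.cos ((r : ℝ) * Real.arccos x))
      have h2 : Real.exp (-(1 / 2)) * Real.cos ((r : ℝ) * Real.arccos x) * Real.exp (x / 2)
          = Real.exp (-(1 - x) / 2) * Real.cos ((r : ℝ) * Real.arccos x) := by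
        rw [show Real.exp (-(1 - x) / 2) = Real.exp (-(1 / 2)) * Real.exp (x / 2) by
          rw [← Real.exp_add]; congr 1; ring]
        ring
      rw [h2] at h1
      refine h1.congr_fun fun j => ?_
      unfold poissonWeight
      rw [div_pow]
      have hj : ((j.factorial : ℕ) : ℝ) ≠ 0 := Nat.cast_ne_zero.mpr j.factorial_ne_zero
      have h2j : (2 : ℝ) ^ j ≠ 0 := by positivity
      field_simp
      have h12 : ((1 : ℝ) / 2) ^ j * 2 ^ j = 1 := by rw [← mul_pow]; norm_num
      linear_combination (x ^ j * Real.cos ((r : ℝ) * Real.arccos x)) * h12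
    have hF : Summable (fun p : ℕ × ℕ =>
        W p * Real.cos (((r + 2 * p.2 - p.1 : ℤ) : ℝ) * Real.arccos x)) := by
      refine Summable.of_norm_bounded summable_W fun p => ?_
      rw [Real.norm_eq_abs, abs_mul]
      calc |W p| * |Real.cos (((r + 2 * p.2 - p.1 : ℤ) : ℝ) * Real.arccos x)|
          ≤ |W p| * 1 := mul_le_mul_of_nonneg_left (Real.abs_cos_le_one _) (abs_nonneg _)
        _ = W p := by rw [mul_one, abs_of_nonneg (W_nonneg p)]
    have hFsum : HasSum (fun p : ℕ × ℕ =>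
        W p * Real.cos (((r + 2 * p.2 - p.1 : ℤ) : ℝ) * Real.arccos x))
        (Real.exp (-(1 - x) / 2) * Real.cos ((r : ℝ) * Real.arccos x)) :=
      hasSum_prod_of_rows hF hrow hq
    have h := hasSum_kernel r (fun m : ℤ => Real.cos ((m : ℝ) * Real.arccos x)) hFsum
    simpa only [chebFun] using h

end Paper
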